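/- Suppose Var_{x∼U(X)}[v·x] ≥ α‖v‖₂² for every v ∈ ℝ^d, where α > 0, and suppose ‖c‖₂ ≤ C₁. Let Z be the closed ball in ℝ^d of radius B = 2C₁/λ centered at the origin, and assume 0 < ρ ≤ min{1/(2BD), α/(12BD³)}. Then the regularized loss L_λ is γ-quasar-convex with respect to the point −c/λ on Z with γ = βρα/(4D²); that is, for every w ∈ Z, ∇L_λ(w)·(w + c/λ) ≥ (βρα/(4D²))·(L_λ(w) − L_λ(−c/λ)). -/

import Mathlib

open Finset
open scoped InnerProductSpace BigOperators

noncomputable section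

/-- The Gibbs distribution on a finite set `X ⊆ ℝ^d` with parameter `w`:
`φ(x; w) = exp(w·x) / ∑_{y ∈ X} exp(w·y)`. -/
def gibbs {d : ℕ} (X : Finset (EuclideanSpace ℝ (Fin d)))
    (w x : EuclideanSpace ℝ (Fin d)) : ℝ :=
  Real.exp ⟪w, x⟫_ℝ / ∑ y ∈ X, Real.exp ⟪w, y⟫_ℝ

/-- Expectation of a real function under the Gibbs distribution. -/
def gibbsExp {d : ℕ} (X : Finset (EuclideanSpace ℝ (Fin d)))
    (w : EuclideanSpace ℝ (Fin d)) (f : EuclideanSpace ℝ (Fin d) → ℝ) : ℝ :=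
  ∑ x ∈ X, gibbs X w x * f x

/-- Variance of a real function under the Gibbs distribution. -/
def gibbsVar {d : ℕ} (X : Finset (EuclideanSpace ℝ (Fin d)))
    (w : EuclideanSpace ℝ (Fin d)) (f : EuclideanSpace ℝ (Fin d) → ℝ) : ℝ :=
  gibbsExp X w (fun x => f x ^ 2) - (gibbsExp X w f) ^ 2

/-- Mean (a vector) of the Gibbs distribution. -/
def gibbsMean {d : ℕ} (X : Finset (EuclideanSpace ℝ (Fin d)))
    (w : EuclideanSpace ℝ (Fin d)) : EuclideanSpace ℝ (Fin d) :=
  ∑ x ∈ X, gibbs X w x • x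

/-- The negative entropy `H(w) = E_{x ∼ φ(·;w)}[log φ(x;w)]`. -/
def negEnt {d : ℕ} (X : Finset (EuclideanSpace ℝ (Fin d)))
    (w : EuclideanSpace ℝ (Fin d)) : ℝ :=
  ∑ x ∈ X, gibbs X w x * Real.log (gibbs X w x)


/-- The fast/slow mixture generator `p(x;w) = (1−β)φ(x;w) + βφ(x;ρw)`. -/
def pmix {d : ℕ} (X : Finset (EuclideanSpace ℝ (Fin d))) (β ρ : ℝ)
    (w x : EuclideanSpace ℝ (Fin d)) : ℝ :=
  (1 - β) * gibbs X w x + β * gibbs X (ρ • w) x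

/-- The regularizer `R(w) = (1−β)H(w) + (β/ρ)H(ρw)`. -/
def reg {d : ℕ} (X : Finset (EuclideanSpace ℝ (Fin d))) (β ρ : ℝ)
    (w : EuclideanSpace ℝ (Fin d)) : ℝ :=
  (1 - β) * negEnt X w + (β / ρ) * negEnt X (ρ • w)

/-- The regularized loss `L_λ(w) = E_{x∼p(·;w)}[c·x] + λ R(w)`. -/
def rloss {d : ℕ} (X : Finset (EuclideanSpace ℝ (Fin d))) (β ρ lam : ℝ)
    (c w : EuclideanSpace ℝ (Fin d)) : ℝ :=
  (∑ x ∈ X, pmix X β ρ w x * ⟪c, x⟫_ℝ) + lam * reg X β ρ w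

/-- Mean (a vector) of the uniform distribution on `X`. -/
def unifMean {d : ℕ} (X : Finset (EuclideanSpace ℝ (Fin d))) : EuclideanSpace ℝ (Fin d) :=
  (X.card : ℝ)⁻¹ • ∑ x ∈ X, x

/-- Expectation of a real function under the uniform distribution on `X`. -/
def unifExp {d : ℕ} (X : Finset (EuclideanSpace ℝ (Fin d)))
    (f : EuclideanSpace ℝ (Fin d) → ℝ) : ℝ :=
  (X.card : ℝ)⁻¹ * ∑ x ∈ X, f x

/-- Variance of a real function under the uniform distribution on `X`. -/
def unifVar {d : ℕ} (X : Finset (EuclideanSpace ℝ (Fin d)))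
    (f : EuclideanSpace ℝ (Fin d) → ℝ) : ℝ :=
  unifExp X (fun x => f x ^ 2) - (unifExp X f) ^ 2

namespace QC

variable {d : ℕ} (X : Finset (EuclideanSpace ℝ (Fin d)))

/-- partition function -/
def Sf (w : EuclideanSpace ℝ (Fin d)) : ℝ := ∑ y ∈ X, Real.exp ⟪w, y⟫_ℝ

lemma Sf_pos (hX : X.Nonempty) (w : EuclideanSpace ℝ (Fin d)) : 0 < Sf X w :=
  Finset.sum_pos (fun _ _ => Real.exp_pos _) hX

lemma gibbs_pos (hX : X.Nonempty) (w x : EuclideanSpace ℝ (Fin d)) : 0 < gibbs X w x :=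
  div_pos (Real.exp_pos _) (Sf_pos X hX w)

lemma sum_gibbs (hX : X.Nonempty) (w : EuclideanSpace ℝ (Fin d)) :
    ∑ x ∈ X, gibbs X w x = 1 := by
  unfold gibbs; rw [← Finset.sum_div]; exact div_self (Sf_pos X hX w).ne'

lemma gibbsExp_eq_div (w : EuclideanSpace ℝ (Fin d)) (f : EuclideanSpace ℝ (Fin d) → ℝ) :
    gibbsExp X w f = (∑ x ∈ X, Real.exp ⟪w, x⟫_ℝ * f x) / Sf X w := by
  unfold gibbsExp gibbs
  rw [Finset.sum_div]
  exact Finset.sum_congr rfl fun x _ => by rw [div_mul_eq_mul_div]; rfl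

/-- covariance of two linear functionals under the Gibbs measure -/
def cova (u a b : EuclideanSpace ℝ (Fin d)) : ℝ :=
  gibbsExp X u (fun x => ⟪a, x⟫_ℝ * ⟪b, x⟫_ℝ)
    - gibbsExp X u (fun x => ⟪a, x⟫_ℝ) * gibbsExp X u (fun x => ⟪b, x⟫_ℝ)

lemma gibbsExp_congr (w : EuclideanSpace ℝ (Fin d)) {f g : EuclideanSpace ℝ (Fin d) → ℝ}
    (h : ∀ x ∈ X, f x = g x) : gibbsExp X w f = gibbsExp X w g :=
  Finset.sum_congr rfl fun x hx => by rw [h x hx]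

lemma gibbsExp_smul (w : EuclideanSpace ℝ (Fin d)) (r : ℝ) (f : EuclideanSpace ℝ (Fin d) → ℝ) :
    gibbsExp X w (fun x => r * f x) = r * gibbsExp X w f := by
  unfold gibbsExp
  rw [Finset.mul_sum]
  exact Finset.sum_congr rfl fun x _ => by ring

lemma gibbsExp_add (w : EuclideanSpace ℝ (Fin d)) (f g : EuclideanSpace ℝ (Fin d) → ℝ) :
    gibbsExp X w (fun x => f x + g x) = gibbsExp X w f + gibbsExp X w g := by
  unfold gibbsExp
  rw [← Finset.sum_add_distrib]
  exact Finset.sum_congr rfl fun x _ => by ring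

lemma cova_smul_middle (u a b : EuclideanSpace ℝ (Fin d)) (r : ℝ) :
    cova X u (r • a) b = r * cova X u a b := by
  unfold cova
  have h1 : gibbsExp X u (fun x => ⟪r • a, x⟫_ℝ * ⟪b, x⟫_ℝ)
      = r * gibbsExp X u (fun x => ⟪a, x⟫_ℝ * ⟪b, x⟫_ℝ) := by
    rw [← gibbsExp_smul]
    exact gibbsExp_congr X u fun x _ => by rw [real_inner_smul_left]; ring
  have h2 : gibbsExp X u (fun x => ⟪r • a, x⟫_ℝ) = r * gibbsExp X u (fun x => ⟪a, x⟫_ℝ) := by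
    rw [← gibbsExp_smul]
    exact gibbsExp_congr X u fun x _ => by rw [real_inner_smul_left]
  rw [h1, h2]; ring

lemma cova_add_right (u a b c' : EuclideanSpace ℝ (Fin d)) :
    cova X u a (b + c') = cova X u a b + cova X u a c' := by
  unfold cova
  have h1 : gibbsExp X u (fun x => ⟪a, x⟫_ℝ * ⟪b + c', x⟫_ℝ)
      = gibbsExp X u (fun x => ⟪a, x⟫_ℝ * ⟪b, x⟫_ℝ)
        + gibbsExp X u (fun x => ⟪a, x⟫_ℝ * ⟪c', x⟫_ℝ) := by
    rw [← gibbsExp_add]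
    exact gibbsExp_congr X u fun x _ => by rw [inner_add_left]; ring
  have h2 : gibbsExp X u (fun x => ⟪b + c', x⟫_ℝ)
      = gibbsExp X u (fun x => ⟪b, x⟫_ℝ) + gibbsExp X u (fun x => ⟪c', x⟫_ℝ) := by
    rw [← gibbsExp_add]
    exact gibbsExp_congr X u fun x _ => by rw [inner_add_left]
  rw [h1, h2]; ring

lemma cova_smul_right (u a b : EuclideanSpace ℝ (Fin d)) (r : ℝ) :
    cova X u a (r • b) = r * cova X u a b := by
  unfold cova
  have h1 : gibbsExp X u (fun x => ⟪a, x⟫_ℝ * ⟪r • b, x⟫_ℝ)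
      = r * gibbsExp X u (fun x => ⟪a, x⟫_ℝ * ⟪b, x⟫_ℝ) := by
    rw [← gibbsExp_smul]
    exact gibbsExp_congr X u fun x _ => by rw [real_inner_smul_left]; ring
  have h2 : gibbsExp X u (fun x => ⟪r • b, x⟫_ℝ) = r * gibbsExp X u (fun x => ⟪b, x⟫_ℝ) := by
    rw [← gibbsExp_smul]
    exact gibbsExp_congr X u fun x _ => by rw [real_inner_smul_left]
  rw [h1, h2]; ring

lemma cova_self (u v : EuclideanSpace ℝ (Fin d)) :
    cova X u v v = gibbsVar X u (fun x => ⟪v, x⟫_ℝ) := by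
  unfold cova gibbsVar
  rw [sq]
  congr 1
  exact gibbsExp_congr X u fun x _ => (sq _).symm

/-- variance as expected square deviation -/
lemma gibbsVar_eq (hX : X.Nonempty) (w : EuclideanSpace ℝ (Fin d))
    (f : EuclideanSpace ℝ (Fin d) → ℝ) :
    gibbsVar X w f = ∑ x ∈ X, gibbs X w x * (f x - gibbsExp X w f) ^ 2 := by
  have h1 := sum_gibbs X hX w
  unfold gibbsVar gibbsExp
  set m := ∑ x ∈ X, gibbs X w x * f x with hm
  have : ∀ x ∈ X, gibbs X w x * (f x - m) ^ 2
      = gibbs X w x * f x ^ 2 - 2 * m * (gibbs X w x * f x) + m ^ 2 * gibbs X w x := by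
    intro x _; ring
  rw [Finset.sum_congr rfl this]
  rw [Finset.sum_add_distrib, Finset.sum_sub_distrib, ← Finset.mul_sum, ← Finset.mul_sum, h1]
  ring

lemma gibbsVar_nonneg (hX : X.Nonempty) (w : EuclideanSpace ℝ (Fin d))
    (f : EuclideanSpace ℝ (Fin d) → ℝ) : 0 ≤ gibbsVar X w f := by
  rw [gibbsVar_eq X hX w f]
  exact Finset.sum_nonneg fun x _ => mul_nonneg (gibbs_pos X hX w x).le (sq_nonneg _)

lemma gibbsVar_le (hX : X.Nonempty) (D : ℝ) (hD : ∀ x ∈ X, ‖x‖ ≤ D)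
    (w v : EuclideanSpace ℝ (Fin d)) :
    gibbsVar X w (fun x => ⟪v, x⟫_ℝ) ≤ D ^ 2 * ‖v‖ ^ 2 := by
  unfold gibbsVar
  have h2 : gibbsExp X w (fun x => ⟪v, x⟫_ℝ ^ 2) ≤ D ^ 2 * ‖v‖ ^ 2 := by
    unfold gibbsExp
    calc ∑ x ∈ X, gibbs X w x * ⟪v, x⟫_ℝ ^ 2
        ≤ ∑ x ∈ X, gibbs X w x * (D ^ 2 * ‖v‖ ^ 2) := by
          refine Finset.sum_le_sum fun x hx => ?_
          refine mul_le_mul_of_nonneg_left ?_ (gibbs_pos X hX w x).le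
          have h := abs_real_inner_le_norm v x
          have h' : |⟪v, x⟫_ℝ| ≤ ‖v‖ * D :=
            h.trans (mul_le_mul_of_nonneg_left (hD x hx) (norm_nonneg _))
          calc ⟪v, x⟫_ℝ ^ 2 = |⟪v, x⟫_ℝ| ^ 2 := (sq_abs _).symm
            _ ≤ (‖v‖ * D) ^ 2 := pow_le_pow_left₀ (abs_nonneg _) h' 2
            _ = D ^ 2 * ‖v‖ ^ 2 := by ring
      _ = D ^ 2 * ‖v‖ ^ 2 := by
          rw [← Finset.sum_mul, sum_gibbs X hX w, one_mul]
  have := sq_nonneg (gibbsExp X w (fun x => ⟪v, x⟫_ℝ))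
  linarith

/-- lower bound on each Gibbs weight when `|⟪w,x⟫| ≤ 1/2` on X -/
lemma gibbs_ge (hX : X.Nonempty) (w : EuclideanSpace ℝ (Fin d))
    (hw : ∀ x ∈ X, |⟪w, x⟫_ℝ| ≤ 1 / 2) (x : EuclideanSpace ℝ (Fin d)) (hx : x ∈ X) :
    Real.exp (-1) / (X.card : ℝ) ≤ gibbs X w x := by
  have hnum : Real.exp (-(1 / 2) : ℝ) ≤ Real.exp ⟪w, x⟫_ℝ := by
    apply Real.exp_le_exp.2
    have := (abs_le.1 (hw x hx)).1; linarith
  have hden : Sf X w ≤ (X.card : ℝ) * Real.exp (1 / 2) := by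
    unfold Sf
    calc ∑ y ∈ X, Real.exp ⟪w, y⟫_ℝ ≤ ∑ y ∈ X, Real.exp (1 / 2) := by
          refine Finset.sum_le_sum fun y hy => Real.exp_le_exp.2 ?_
          exact (abs_le.1 (hw y hy)).2
      _ = (X.card : ℝ) * Real.exp (1 / 2) := by rw [Finset.sum_const, nsmul_eq_mul]
  have hcard : (0 : ℝ) < (X.card : ℝ) := by
    exact_mod_cast Finset.card_pos.2 hX
  have hSpos : (0:ℝ) < ∑ y ∈ X, Real.exp ⟪w, y⟫_ℝ := Sf_pos X hX w
  have hden' : ∑ y ∈ X, Real.exp ⟪w, y⟫_ℝ ≤ (X.card : ℝ) * Real.exp (1 / 2) := hden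
  unfold gibbs
  rw [div_le_div_iff₀ hcard hSpos]
  calc Real.exp (-1) * ∑ y ∈ X, Real.exp ⟪w, y⟫_ℝ
        ≤ Real.exp (-1) * ((X.card : ℝ) * Real.exp (1 / 2)) := by
        exact mul_le_mul_of_nonneg_left hden' (Real.exp_pos _).le
    _ = Real.exp (-(1 / 2) : ℝ) * (X.card : ℝ) := by
        have : Real.exp (-1 : ℝ) * Real.exp (1 / 2 : ℝ) = Real.exp (-(1 / 2) : ℝ) := by
          rw [← Real.exp_add]; norm_num
        calc Real.exp (-1) * ((X.card : ℝ) * Real.exp (1 / 2))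
            = Real.exp (-1) * Real.exp (1 / 2) * (X.card : ℝ) := by ring
          _ = Real.exp (-(1 / 2) : ℝ) * (X.card : ℝ) := by rw [this]
    _ ≤ Real.exp ⟪w, x⟫_ℝ * (X.card : ℝ) := mul_le_mul_of_nonneg_right hnum hcard.le

/-- uniform expectation of squared deviation about arbitrary center dominates variance -/
lemma unif_bound (hX : X.Nonempty) (f : EuclideanSpace ℝ (Fin d) → ℝ) (m : ℝ) :
    unifVar X f ≤ (X.card : ℝ)⁻¹ * ∑ x ∈ X, (f x - m) ^ 2 := by
  have hcard : (0 : ℝ) < (X.card : ℝ) := by exact_mod_cast Finset.card_pos.2 hX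
  have key : (X.card : ℝ)⁻¹ * ∑ x ∈ X, (f x - m) ^ 2
      = unifVar X f + (unifExp X f - m) ^ 2 := by
    unfold unifVar unifExp
    have expand : ∑ x ∈ X, (f x - m) ^ 2
        = ∑ x ∈ X, f x ^ 2 - 2 * m * ∑ x ∈ X, f x + (X.card : ℝ) * m ^ 2 := by
      have : ∀ x ∈ X, (f x - m) ^ 2 = f x ^ 2 - 2 * m * f x + m ^ 2 := fun x _ => by ring
      rw [Finset.sum_congr rfl this, Finset.sum_add_distrib, Finset.sum_sub_distrib,
        ← Finset.mul_sum, Finset.sum_const, nsmul_eq_mul]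
    rw [expand]
    field_simp
    ring
  nlinarith [sq_nonneg (unifExp X f - m)]

lemma gibbsVar_ge (hX : X.Nonempty) (w : EuclideanSpace ℝ (Fin d))
    (hw : ∀ x ∈ X, |⟪w, x⟫_ℝ| ≤ 1 / 2) (f : EuclideanSpace ℝ (Fin d) → ℝ) :
    Real.exp (-1) * unifVar X f ≤ gibbsVar X w f := by
  have hcard : (0 : ℝ) < (X.card : ℝ) := by exact_mod_cast Finset.card_pos.2 hX
  set m := gibbsExp X w f with hm
  have h1 : gibbsVar X w f = ∑ x ∈ X, gibbs X w x * (f x - m) ^ 2 := gibbsVar_eq X hX w f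
  have h2 : Real.exp (-1) * ((X.card : ℝ)⁻¹ * ∑ x ∈ X, (f x - m) ^ 2)
      ≤ ∑ x ∈ X, gibbs X w x * (f x - m) ^ 2 := by
    rw [mul_left_comm, Finset.mul_sum, Finset.mul_sum]
    refine Finset.sum_le_sum fun x hx => ?_
    have := gibbs_ge X hX w hw x hx
    have h3 : Real.exp (-1) * (X.card : ℝ)⁻¹ = Real.exp (-1) / (X.card : ℝ) := by
      rw [div_eq_mul_inv]
    calc (X.card : ℝ)⁻¹ * (Real.exp (-1) * (f x - m) ^ 2)
        = (Real.exp (-1) / (X.card : ℝ)) * (f x - m) ^ 2 := by rw [← h3]; ring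
      _ ≤ gibbs X w x * (f x - m) ^ 2 := mul_le_mul_of_nonneg_right this (sq_nonneg _)
  have h4 := unif_bound X hX f m
  rw [h1]
  calc Real.exp (-1) * unifVar X f
      ≤ Real.exp (-1) * ((X.card : ℝ)⁻¹ * ∑ x ∈ X, (f x - m) ^ 2) :=
        mul_le_mul_of_nonneg_left h4 (Real.exp_pos _).le
    _ ≤ _ := h2

lemma inner_line (u t x : EuclideanSpace ℝ (Fin d)) (s : ℝ) :
    ⟪u + s • t, x⟫_ℝ = ⟪u, x⟫_ℝ + s * ⟪t, x⟫_ℝ := by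
  rw [inner_add_left, real_inner_smul_left]

lemma hasDerivAt_inner_line (u t x : EuclideanSpace ℝ (Fin d)) (s : ℝ) :
    HasDerivAt (fun s : ℝ => ⟪u + s • t, x⟫_ℝ) ⟪t, x⟫_ℝ s := by
  have : (fun s : ℝ => ⟪u + s • t, x⟫_ℝ) = fun s : ℝ => ⟪u, x⟫_ℝ + s * ⟪t, x⟫_ℝ := by
    funext s; exact inner_line u t x s
  rw [this]
  simpa using ((hasDerivAt_id s).mul_const ⟪t, x⟫_ℝ).const_add ⟪u, x⟫_ℝ

lemma hasDerivAt_S (u t : EuclideanSpace ℝ (Fin d)) (s : ℝ) :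
    HasDerivAt (fun s : ℝ => Sf X (u + s • t))
      (∑ x ∈ X, Real.exp ⟪u + s • t, x⟫_ℝ * ⟪t, x⟫_ℝ) s := by
  unfold Sf
  refine HasDerivAt.fun_sum fun x _ => ?_
  simpa [mul_comm] using (hasDerivAt_inner_line u t x s).exp

lemma hasDerivAt_N (a u t : EuclideanSpace ℝ (Fin d)) (s : ℝ) :
    HasDerivAt (fun s : ℝ => ∑ x ∈ X, Real.exp ⟪u + s • t, x⟫_ℝ * ⟪a, x⟫_ℝ)
      (∑ x ∈ X, Real.exp ⟪u + s • t, x⟫_ℝ * ⟪t, x⟫_ℝ * ⟪a, x⟫_ℝ) s := by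
  refine HasDerivAt.fun_sum fun x _ => ?_
  have h := ((hasDerivAt_inner_line u t x s).exp).mul_const ⟪a, x⟫_ℝ
  simpa [mul_comm, mul_assoc, mul_left_comm] using h

lemma hasDerivAt_M (u t : EuclideanSpace ℝ (Fin d)) (s : ℝ) :
    HasDerivAt (fun s : ℝ => ∑ x ∈ X, Real.exp ⟪u + s • t, x⟫_ℝ * ⟪u + s • t, x⟫_ℝ)
      ((∑ x ∈ X, Real.exp ⟪u + s • t, x⟫_ℝ * ⟪t, x⟫_ℝ * ⟪u + s • t, x⟫_ℝ)
        + ∑ x ∈ X, Real.exp ⟪u + s • t, x⟫_ℝ * ⟪t, x⟫_ℝ) s := by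
  rw [← Finset.sum_add_distrib]
  refine HasDerivAt.fun_sum fun x _ => ?_
  have h := ((hasDerivAt_inner_line u t x s).exp).mul (hasDerivAt_inner_line u t x s)
  exact h

lemma hasDerivAt_gibbsExpLin (hX : X.Nonempty) (a u t : EuclideanSpace ℝ (Fin d)) (s : ℝ) :
    HasDerivAt (fun s : ℝ => gibbsExp X (u + s • t) (fun x => ⟪a, x⟫_ℝ))
      (cova X (u + s • t) t a) s := by
  have hfun : (fun s : ℝ => gibbsExp X (u + s • t) (fun x => ⟪a, x⟫_ℝ))
      = fun s : ℝ => (∑ x ∈ X, Real.exp ⟪u + s • t, x⟫_ℝ * ⟪a, x⟫_ℝ) / Sf X (u + s • t) := by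
    funext s; exact gibbsExp_eq_div X _ _
  rw [hfun]
  have hS := hasDerivAt_S X u t s
  have hN := hasDerivAt_N X a u t s
  have hSne := (Sf_pos X hX (u + s • t)).ne'
  have h := hN.div hS hSne
  refine h.congr_deriv ?_
  set p := u + s • t
  set S := Sf X p with hSdef
  set A := ∑ x ∈ X, Real.exp ⟪p, x⟫_ℝ * ⟪a, x⟫_ℝ with hA
  set T := ∑ x ∈ X, Real.exp ⟪p, x⟫_ℝ * ⟪t, x⟫_ℝ with hT
  set TA := ∑ x ∈ X, Real.exp ⟪p, x⟫_ℝ * ⟪t, x⟫_ℝ * ⟪a, x⟫_ℝ with hTA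
  have h1 : cova X p t a = TA / S - (T / S) * (A / S) := by
    unfold cova
    rw [gibbsExp_eq_div, gibbsExp_eq_div, gibbsExp_eq_div]
    congr 2
    · rw [hTA]; exact Finset.sum_congr rfl fun x _ => by ring
  rw [h1]
  field_simp

lemma negEnt_eq (hX : X.Nonempty) (w : EuclideanSpace ℝ (Fin d)) :
    negEnt X w = (∑ x ∈ X, Real.exp ⟪w, x⟫_ℝ * ⟪w, x⟫_ℝ) / Sf X w - Real.log (Sf X w) := by
  have hSpos := Sf_pos X hX w
  have key : ∀ x ∈ X, gibbs X w x * Real.log (gibbs X w x)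
      = (Real.exp ⟪w, x⟫_ℝ * ⟪w, x⟫_ℝ) / Sf X w - gibbs X w x * Real.log (Sf X w) := by
    intro x _
    have hlog : Real.log (gibbs X w x) = ⟪w, x⟫_ℝ - Real.log (Sf X w) := by
      unfold gibbs
      rw [show (∑ y ∈ X, Real.exp ⟪w, y⟫_ℝ) = Sf X w from rfl,
        Real.log_div (Real.exp_ne_zero _) hSpos.ne', Real.log_exp]
    rw [hlog]
    unfold gibbs
    rw [show (∑ y ∈ X, Real.exp ⟪w, y⟫_ℝ) = Sf X w from rfl]
    field_simp
  unfold negEnt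
  rw [Finset.sum_congr rfl key, Finset.sum_sub_distrib, ← Finset.sum_div, ← Finset.sum_mul,
    sum_gibbs X hX w, one_mul]

lemma hasDerivAt_negEnt (hX : X.Nonempty) (u t : EuclideanSpace ℝ (Fin d)) (s : ℝ) :
    HasDerivAt (fun s : ℝ => negEnt X (u + s • t)) (cova X (u + s • t) t (u + s • t)) s := by
  have hfun : (fun s : ℝ => negEnt X (u + s • t))
      = fun s : ℝ => (∑ x ∈ X, Real.exp ⟪u + s • t, x⟫_ℝ * ⟪u + s • t, x⟫_ℝ) / Sf X (u + s • t)
          - Real.log (Sf X (u + s • t)) := by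
    funext s; exact negEnt_eq X hX _
  rw [hfun]
  have hS := hasDerivAt_S X u t s
  have hM := hasDerivAt_M X u t s
  have hSne := (Sf_pos X hX (u + s • t)).ne'
  have h := (hM.div hS hSne).sub (hS.log hSne)
  refine h.congr_deriv ?_
  set p := u + s • t
  set S := Sf X p with hSdef
  set T := ∑ x ∈ X, Real.exp ⟪p, x⟫_ℝ * ⟪t, x⟫_ℝ with hT
  set M := ∑ x ∈ X, Real.exp ⟪p, x⟫_ℝ * ⟪p, x⟫_ℝ with hM2
  set TP := ∑ x ∈ X, Real.exp ⟪p, x⟫_ℝ * ⟪t, x⟫_ℝ * ⟪p, x⟫_ℝ with hTP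
  have h1 : cova X p t p = TP / S - (T / S) * (M / S) := by
    unfold cova
    rw [gibbsExp_eq_div, gibbsExp_eq_div, gibbsExp_eq_div]
    congr 2
    · rw [hTP]; exact Finset.sum_congr rfl fun x _ => by ring
  rw [h1]
  field_simp
  ring

lemma rloss_decomp (β ρ lam : ℝ) (c w : EuclideanSpace ℝ (Fin d)) :
    rloss X β ρ lam c w
      = (1 - β) * gibbsExp X w (fun x => ⟪c, x⟫_ℝ)
        + β * gibbsExp X (ρ • w) (fun x => ⟪c, x⟫_ℝ)
        + lam * ((1 - β) * negEnt X w + (β / ρ) * negEnt X (ρ • w)) := by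
  unfold rloss pmix reg gibbsExp
  have : ∀ x ∈ X, ((1 - β) * gibbs X w x + β * gibbs X (ρ • w) x) * ⟪c, x⟫_ℝ
      = (1 - β) * (gibbs X w x * ⟪c, x⟫_ℝ) + β * (gibbs X (ρ • w) x * ⟪c, x⟫_ℝ) :=
    fun x _ => by ring
  rw [Finset.sum_congr rfl this, Finset.sum_add_distrib, ← Finset.mul_sum, ← Finset.mul_sum]

/-- the directional derivative of the regularized loss at `p` in direction `t` -/
def Dform (β ρ lam : ℝ) (c p t : EuclideanSpace ℝ (Fin d)) : ℝ :=
  (1 - β) * cova X p t (c + lam • p) + β * ρ * cova X (ρ • p) t (c + lam • p)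

lemma pt_eq (ρ : ℝ) (u t : EuclideanSpace ℝ (Fin d)) (s : ℝ) :
    ρ • u + s • (ρ • t) = ρ • (u + s • t) := by
  rw [smul_add, smul_comm ρ s t]

lemma hasDerivAt_rloss_line (hX : X.Nonempty) {β ρ lam : ℝ} (hρ : ρ ≠ 0)
    (c u t : EuclideanSpace ℝ (Fin d)) (s : ℝ) :
    HasDerivAt (fun s : ℝ => rloss X β ρ lam c (u + s • t))
      (Dform X β ρ lam c (u + s • t) t) s := by
  have h1 := (hasDerivAt_gibbsExpLin X hX c u t s).const_mul (1 - β)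
  have h2 := (hasDerivAt_gibbsExpLin X hX c (ρ • u) (ρ • t) s).const_mul β
  have h3 := (hasDerivAt_negEnt X hX u t s).const_mul (1 - β)
  have h4 := (hasDerivAt_negEnt X hX (ρ • u) (ρ • t) s).const_mul (β / ρ)
  have hcomb := (h1.add h2).add ((h3.add h4).const_mul lam)
  have hfun : (fun s : ℝ =>
        (1 - β) * gibbsExp X (u + s • t) (fun x => ⟪c, x⟫_ℝ)
        + β * gibbsExp X (ρ • u + s • (ρ • t)) (fun x => ⟪c, x⟫_ℝ)
        + lam * ((1 - β) * negEnt X (u + s • t)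
            + (β / ρ) * negEnt X (ρ • u + s • (ρ • t))))
      = fun s : ℝ => rloss X β ρ lam c (u + s • t) := by
    funext s
    rw [pt_eq, rloss_decomp]
  rw [← hfun]
  refine hcomb.congr_deriv ?_
  rw [pt_eq]
  set p := u + s • t with hp
  have e1 : cova X (ρ • p) (ρ • t) c = ρ * cova X (ρ • p) t c := cova_smul_middle X _ _ _ _
  have e2 : cova X (ρ • p) (ρ • t) (ρ • p) = ρ * (ρ * cova X (ρ • p) t p) := by
    rw [cova_smul_middle, cova_smul_right]
  have e3 : ∀ q : EuclideanSpace ℝ (Fin d), cova X q t (c + lam • p)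
      = cova X q t c + lam * cova X q t p := by
    intro q
    rw [cova_add_right, cova_smul_right]
  unfold Dform
  rw [e1, e2, e3, e3]
  field_simp
  ring

lemma diff_inner (x u : EuclideanSpace ℝ (Fin d)) :
    DifferentiableAt ℝ (fun w : EuclideanSpace ℝ (Fin d) => ⟪w, x⟫_ℝ) u := by
  have : (fun w : EuclideanSpace ℝ (Fin d) => ⟪w, x⟫_ℝ)
      = fun w : EuclideanSpace ℝ (Fin d) => ⟪x, w⟫_ℝ := by
    funext w; exact real_inner_comm _ _
  rw [this]
  exact (differentiableAt_const x).inner ℝ differentiableAt_id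

lemma diff_S (hX : X.Nonempty) (u : EuclideanSpace ℝ (Fin d)) :
    DifferentiableAt ℝ (fun w => Sf X w) u := by
  unfold Sf
  exact DifferentiableAt.fun_sum fun x _ => (diff_inner x u).exp

lemma diff_gibbsExpLin (hX : X.Nonempty) (a u : EuclideanSpace ℝ (Fin d)) :
    DifferentiableAt ℝ (fun w => gibbsExp X w (fun x => ⟪a, x⟫_ℝ)) u := by
  have hfun : (fun w => gibbsExp X w (fun x => ⟪a, x⟫_ℝ))
      = fun w => (∑ x ∈ X, Real.exp ⟪w, x⟫_ℝ * ⟪a, x⟫_ℝ) / Sf X w := by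
    funext w; exact gibbsExp_eq_div X _ _
  rw [hfun]
  have hN : DifferentiableAt ℝ (fun w => ∑ x ∈ X, Real.exp ⟪w, x⟫_ℝ * ⟪a, x⟫_ℝ) u :=
    DifferentiableAt.fun_sum fun x _ => ((diff_inner x u).exp).mul_const _
  have : (fun w => (∑ x ∈ X, Real.exp ⟪w, x⟫_ℝ * ⟪a, x⟫_ℝ) / Sf X w)
      = fun w => (∑ x ∈ X, Real.exp ⟪w, x⟫_ℝ * ⟪a, x⟫_ℝ) * (Sf X w)⁻¹ := by
    funext w; rw [div_eq_mul_inv]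
  rw [this]
  exact hN.mul ((diff_S X hX u).inv (Sf_pos X hX u).ne')

lemma diff_negEnt (hX : X.Nonempty) (u : EuclideanSpace ℝ (Fin d)) :
    DifferentiableAt ℝ (fun w => negEnt X w) u := by
  have hfun : (fun w => negEnt X w)
      = fun w => (∑ x ∈ X, Real.exp ⟪w, x⟫_ℝ * ⟪w, x⟫_ℝ) / Sf X w - Real.log (Sf X w) := by
    funext w; exact negEnt_eq X hX _
  rw [hfun]
  have hM : DifferentiableAt ℝ (fun w => ∑ x ∈ X, Real.exp ⟪w, x⟫_ℝ * ⟪w, x⟫_ℝ) u :=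
    DifferentiableAt.fun_sum fun x _ => ((diff_inner x u).exp).mul (diff_inner x u)
  have : (fun w => (∑ x ∈ X, Real.exp ⟪w, x⟫_ℝ * ⟪w, x⟫_ℝ) / Sf X w - Real.log (Sf X w))
      = fun w => (∑ x ∈ X, Real.exp ⟪w, x⟫_ℝ * ⟪w, x⟫_ℝ) * (Sf X w)⁻¹
          - Real.log (Sf X w) := by
    funext w; rw [div_eq_mul_inv]
  rw [this]
  exact (hM.mul ((diff_S X hX u).inv (Sf_pos X hX u).ne')).sub
    ((diff_S X hX u).log (Sf_pos X hX u).ne')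

lemma diff_smul (ρ : ℝ) (u : EuclideanSpace ℝ (Fin d)) :
    DifferentiableAt ℝ (fun w : EuclideanSpace ℝ (Fin d) => ρ • w) u :=
  differentiableAt_id.const_smul ρ

lemma diff_rloss (hX : X.Nonempty) (β ρ lam : ℝ) (c u : EuclideanSpace ℝ (Fin d)) :
    DifferentiableAt ℝ (rloss X β ρ lam c) u := by
  have hfun : rloss X β ρ lam c
      = fun w => (1 - β) * gibbsExp X w (fun x => ⟪c, x⟫_ℝ)
        + β * gibbsExp X (ρ • w) (fun x => ⟪c, x⟫_ℝ)
        + lam * ((1 - β) * negEnt X w + (β / ρ) * negEnt X (ρ • w)) := by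
    funext w; exact rloss_decomp X β ρ lam c w
  rw [hfun]
  have hQ := diff_gibbsExpLin X hX c u
  have hQρ : DifferentiableAt ℝ (fun w => gibbsExp X (ρ • w) (fun x => ⟪c, x⟫_ℝ)) u :=
    (diff_gibbsExpLin X hX c (ρ • u)).comp u (diff_smul ρ u)
  have hH := diff_negEnt X hX u
  have hHρ : DifferentiableAt ℝ (fun w => negEnt X (ρ • w)) u :=
    (diff_negEnt X hX (ρ • u)).comp u (diff_smul ρ u)
  exact ((hQ.const_mul _).add (hQρ.const_mul _)).add
    (((hH.const_mul _).add (hHρ.const_mul _)).const_mul lam)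

lemma grad_eval (hX : X.Nonempty) {β ρ lam : ℝ} (hρ : ρ ≠ 0)
    (c u t : EuclideanSpace ℝ (Fin d)) :
    ⟪gradient (rloss X β ρ lam c) u, t⟫_ℝ = Dform X β ρ lam c u t := by
  have hdiff := diff_rloss X hX β ρ lam c u
  have hgrad := hdiff.hasGradientAt
  have hF : HasFDerivAt (rloss X β ρ lam c)
      (InnerProductSpace.toDual ℝ _ (gradient (rloss X β ρ lam c) u)) u :=
    hasGradientAt_iff_hasFDerivAt.1 hgrad
  have hline : HasDerivAt (fun s : ℝ => u + s • t) t 0 := by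
    simpa using ((hasDerivAt_id (0 : ℝ)).smul_const t).const_add u
  have hF' : HasFDerivAt (rloss X β ρ lam c)
      (InnerProductSpace.toDual ℝ _ (gradient (rloss X β ρ lam c) u))
      ((fun s : ℝ => u + s • t) 0) := by
    simpa using hF
  have hcomp := hF'.comp_hasDerivAt 0 hline
  have hline2 := hasDerivAt_rloss_line X hX (β := β) (lam := lam) hρ c u t 0
  have huniq := hline2.unique hcomp
  have h0 : u + (0 : ℝ) • t = u := by simp
  rw [h0] at huniq
  rw [huniq]
  exact (InnerProductSpace.toDual_apply_apply).symm

lemma rloss_le (hX : X.Nonempty) {β ρ lam : ℝ} (hβ0 : 0 ≤ β) (hβ1 : β ≤ 1)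
    (hρ0 : 0 < ρ) (hρ1 : ρ ≤ 1) (hlam : 0 ≤ lam)
    (D : ℝ) (hD : ∀ x ∈ X, ‖x‖ ≤ D) (c wst v : EuclideanSpace ℝ (Fin d))
    (hc0 : c + lam • wst = 0) :
    rloss X β ρ lam c (wst + v) - rloss X β ρ lam c wst ≤ lam * D ^ 2 * ‖v‖ ^ 2 := by
  set C := lam * D ^ 2 * ‖v‖ ^ 2 with hC
  set F := fun s : ℝ => rloss X β ρ lam c (wst + s • v) with hF
  set f' := fun s : ℝ => Dform X β ρ lam c (wst + s • v) v with hf'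
  have hder : ∀ s ∈ Set.Icc (0 : ℝ) 1, HasDerivWithinAt F (f' s) (Set.Icc 0 1) s := by
    intro s _
    exact (hasDerivAt_rloss_line X hX hρ0.ne' c wst v s).hasDerivWithinAt
  have hbound : ∀ s ∈ Set.Ico (0 : ℝ) 1, ‖f' s‖ ≤ C := by
    intro s hs
    obtain ⟨hs0, hs1⟩ := hs
    set p := wst + s • v with hp
    have hcl : c + lam • p = (lam * s) • v := by
      rw [hp, smul_add, smul_smul, ← add_assoc, hc0, zero_add]
    have hvar1 : 0 ≤ gibbsVar X p (fun x => ⟪v, x⟫_ℝ) := gibbsVar_nonneg X hX _ _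
    have hvar1' : gibbsVar X p (fun x => ⟪v, x⟫_ℝ) ≤ D ^ 2 * ‖v‖ ^ 2 := gibbsVar_le X hX D hD _ _
    have hvar2 : 0 ≤ gibbsVar X (ρ • p) (fun x => ⟪v, x⟫_ℝ) := gibbsVar_nonneg X hX _ _
    have hvar2' : gibbsVar X (ρ • p) (fun x => ⟪v, x⟫_ℝ) ≤ D ^ 2 * ‖v‖ ^ 2 :=
      gibbsVar_le X hX D hD _ _
    have hDf : f' s = (lam * s) * ((1 - β) * gibbsVar X p (fun x => ⟪v, x⟫_ℝ)
        + β * ρ * gibbsVar X (ρ • p) (fun x => ⟪v, x⟫_ℝ)) := by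
      show Dform X β ρ lam c p v = _
      unfold Dform
      rw [hcl, cova_smul_right, cova_smul_right, cova_self, cova_self]
      ring
    set V1 := gibbsVar X p (fun x => ⟪v, x⟫_ℝ) with hV1
    set V2 := gibbsVar X (ρ • p) (fun x => ⟪v, x⟫_ℝ) with hV2
    have hM0 : 0 ≤ D ^ 2 * ‖v‖ ^ 2 := le_trans hvar1 hvar1'
    have hρV2 : ρ * V2 ≤ D ^ 2 * ‖v‖ ^ 2 := by nlinarith
    have ha : (1 - β) * V1 ≤ (1 - β) * (D ^ 2 * ‖v‖ ^ 2) :=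
      mul_le_mul_of_nonneg_left hvar1' (by linarith)
    have hb := mul_le_mul_of_nonneg_left hρV2 hβ0
    have hsum : (1 - β) * V1 + β * ρ * V2 ≤ D ^ 2 * ‖v‖ ^ 2 := by nlinarith
    have hsumnn : 0 ≤ (1 - β) * V1 + β * ρ * V2 := by
      have := mul_nonneg (mul_nonneg hβ0 hρ0.le) hvar2
      have := mul_nonneg (show (0:ℝ) ≤ 1 - β by linarith) hvar1
      linarith
    have h2 : 0 ≤ lam * s := mul_nonneg hlam hs0
    rw [hDf, Real.norm_eq_abs, abs_of_nonneg (mul_nonneg h2 hsumnn)]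
    calc (lam * s) * ((1 - β) * V1 + β * ρ * V2)
        ≤ (lam * s) * (D ^ 2 * ‖v‖ ^ 2) := mul_le_mul_of_nonneg_left hsum h2
      _ ≤ lam * (D ^ 2 * ‖v‖ ^ 2) :=
          mul_le_mul_of_nonneg_right (mul_le_of_le_one_right hlam hs1.le) hM0
      _ = C := by rw [hC]; ring
  have key := norm_image_sub_le_of_norm_deriv_le_segment' hder hbound 1 (by norm_num)
  rw [Real.norm_eq_abs] at key
  have h1 : F 1 = rloss X β ρ lam c (wst + v) := by rw [hF]; simp
  have h0 : F 0 = rloss X β ρ lam c wst := by rw [hF]; simp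
  have := (abs_le.1 key).2
  rw [h1, h0] at this
  linarith

end QC

set_option maxHeartbeats 1000000 in
/-- If `Var_{x∼U(X)}[v·x] ≥ α‖v‖₂²` for every `v`, `‖c‖₂ ≤ C₁`,
`Z` is the closed ball of radius `B = 2C₁/λ` about the origin, and
`0 < ρ ≤ min{1/(2BD), α/(12BD³)}`, then `L_λ` is `γ`-quasar-convex with respect to `−c/λ`
on `Z` with `γ = βρα/(4D²)`: for every `w ∈ Z`,
`∇L_λ(w)·(w + c/λ) ≥ (βρα/(4D²))·(L_λ(w) − L_λ(−c/λ))`. -/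
theorem rloss_quasar_convex {d : ℕ} (hd : 1 ≤ d)
    (X : Finset (EuclideanSpace ℝ (Fin d))) (hX : X.Nonempty)
    (D : ℝ) (hDpos : 0 < D) (hD : ∀ x ∈ X, ‖x‖ ≤ D)
    (β ρ : ℝ) (hβ : β ∈ Set.Ioo (0 : ℝ) 1) (hρ : ρ ∈ Set.Ioo (0 : ℝ) 1)
    (c : EuclideanSpace ℝ (Fin d)) (lam : ℝ) (hlam : 0 < lam)
    (α : ℝ) (hα : 0 < α)
    (hvar : ∀ v : EuclideanSpace ℝ (Fin d),
      unifVar X (fun x => ⟪v, x⟫_ℝ) ≥ α * ‖v‖ ^ 2)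
    (C₁ : ℝ) (hc : ‖c‖ ≤ C₁)
    (B : ℝ) (hB : B = 2 * C₁ / lam)
    (hρsmall : ρ ≤ min (1 / (2 * B * D)) (α / (12 * B * D ^ 3))) :
    ∀ w ∈ Metric.closedBall (0 : EuclideanSpace ℝ (Fin d)) B,
      ⟪gradient (rloss X β ρ lam c) w, w + lam⁻¹ • c⟫_ℝ
        ≥ (β * ρ * α / (4 * D ^ 2))
            * (rloss X β ρ lam c w - rloss X β ρ lam c (-(lam⁻¹ • c))) := by
  intro w hw
  have hwB : ‖w‖ ≤ B := by
    simpa [Metric.mem_closedBall, dist_zero_right] using hw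
  have hB0 : 0 ≤ B := le_trans (norm_nonneg w) hwB
  -- B must be positive, otherwise ρ ≤ 0
  have hBpos : 0 < B := by
    rcases lt_or_eq_of_le hB0 with h | h
    · exact h
    · exfalso
      have h1 : (1 : ℝ) / (2 * B * D) = 0 := by rw [← h]; simp
      have := le_trans hρsmall (min_le_left _ _)
      rw [h1] at this
      linarith [hρ.1]
  set v : EuclideanSpace ℝ (Fin d) := w + lam⁻¹ • c with hv
  set wst : EuclideanSpace ℝ (Fin d) := -(lam⁻¹ • c) with hwst
  have hwv : wst + v = w := by rw [hwst, hv]; abel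
  have hc0 : c + lam • wst = 0 := by
    rw [hwst, smul_neg, smul_smul, mul_inv_cancel₀ hlam.ne', one_smul]
    abel
  have hclamw : c + lam • w = lam • v := by
    rw [← hwv, smul_add, ← add_assoc, hc0, zero_add]
  -- rewrite LHS via the directional derivative formula
  have hLHS : ⟪gradient (rloss X β ρ lam c) w, v⟫_ℝ
      = (1 - β) * (lam * gibbsVar X w (fun x => ⟪v, x⟫_ℝ))
        + β * ρ * (lam * gibbsVar X (ρ • w) (fun x => ⟪v, x⟫_ℝ)) := by
    rw [QC.grad_eval X hX hρ.1.ne' c w v]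
    unfold QC.Dform
    rw [hclamw, QC.cova_smul_right, QC.cova_smul_right, QC.cova_self, QC.cova_self]
  -- the Gibbs weights at ρ • w are nearly uniform
  have hsmallinner : ∀ x ∈ X, |⟪ρ • w, x⟫_ℝ| ≤ 1 / 2 := by
    intro x hx
    have h2BD : 0 < 2 * B * D := mul_pos (mul_pos two_pos hBpos) hDpos
    have hρle : ρ ≤ 1 / (2 * B * D) := le_trans hρsmall (min_le_left _ _)
    have hkey : ρ * (2 * B * D) ≤ 1 := by
      rw [← le_div_iff₀ h2BD]; exact hρle
    have hinner : |⟪w, x⟫_ℝ| ≤ B * D := by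
      refine (abs_real_inner_le_norm w x).trans ?_
      exact mul_le_mul hwB (hD x hx) (norm_nonneg x) hB0
    rw [real_inner_smul_left, abs_mul, abs_of_nonneg hρ.1.le]
    nlinarith [hρ.1]
  -- lower bound for the slow-time-scale variance
  have hexp : (1 / 4 : ℝ) ≤ Real.exp (-1) := by
    have h1 : Real.exp 1 < 4 := lt_trans Real.exp_one_lt_d9 (by norm_num)
    have h2 : Real.exp (-1) * Real.exp 1 = 1 := by
      rw [← Real.exp_add]; norm_num
    nlinarith [Real.exp_pos (-1 : ℝ)]
  have hV2 : α * ‖v‖ ^ 2 / 4 ≤ gibbsVar X (ρ • w) (fun x => ⟪v, x⟫_ℝ) := by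
    have h1 := QC.gibbsVar_ge X hX (ρ • w) hsmallinner (fun x => ⟪v, x⟫_ℝ)
    have h2 := hvar v
    have h3 : 0 ≤ α * ‖v‖ ^ 2 := mul_nonneg hα.le (by positivity)
    nlinarith [Real.exp_pos (-1 : ℝ)]
  have hV1 : 0 ≤ gibbsVar X w (fun x => ⟪v, x⟫_ℝ) := QC.gibbsVar_nonneg X hX _ _
  -- upper bound on the loss gap
  have hMVT : rloss X β ρ lam c w - rloss X β ρ lam c wst ≤ lam * D ^ 2 * ‖v‖ ^ 2 := by
    have := QC.rloss_le X hX hβ.1.le hβ.2.le hρ.1 hρ.2.le hlam.le D hD c wst v hc0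
    rw [hwv] at this
    exact this
  -- assemble
  have hγ : 0 < β * ρ * α / (4 * D ^ 2) :=
    div_pos (mul_pos (mul_pos hβ.1 hρ.1) hα) (by nlinarith [hDpos])
  have hRHS : (β * ρ * α / (4 * D ^ 2)) * (rloss X β ρ lam c w - rloss X β ρ lam c wst)
      ≤ (β * ρ * α / (4 * D ^ 2)) * (lam * D ^ 2 * ‖v‖ ^ 2) :=
    mul_le_mul_of_nonneg_left hMVT hγ.le
  have heq : (β * ρ * α / (4 * D ^ 2)) * (lam * D ^ 2 * ‖v‖ ^ 2)
      = β * ρ * (lam * (α * ‖v‖ ^ 2 / 4)) := by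
    have hD2 : (4 * D ^ 2 : ℝ) ≠ 0 := by nlinarith [hDpos]
    field_simp
  have hstep : β * ρ * (lam * (α * ‖v‖ ^ 2 / 4))
      ≤ (1 - β) * (lam * gibbsVar X w (fun x => ⟪v, x⟫_ℝ))
        + β * ρ * (lam * gibbsVar X (ρ • w) (fun x => ⟪v, x⟫_ℝ)) := by
    have hbρ : 0 ≤ β * ρ := mul_nonneg hβ.1.le hρ.1.le
    have h1 : β * ρ * (lam * (α * ‖v‖ ^ 2 / 4)) ≤ β * ρ * (lam * gibbsVar X (ρ • w)
        (fun x => ⟪v, x⟫_ℝ)) := by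
      refine mul_le_mul_of_nonneg_left ?_ hbρ
      exact mul_le_mul_of_nonneg_left hV2 hlam.le
    have h2 : 0 ≤ (1 - β) * (lam * gibbsVar X w (fun x => ⟪v, x⟫_ℝ)) := by
      have : (0:ℝ) ≤ 1 - β := by linarith [hβ.2]
      exact mul_nonneg this (mul_nonneg hlam.le hV1)
    linarith
  rw [ge_iff_le]
  calc (β * ρ * α / (4 * D ^ 2)) * (rloss X β ρ lam c w - rloss X β ρ lam c (-(lam⁻¹ • c)))
      = (β * ρ * α / (4 * D ^ 2)) * (rloss X β ρ lam c w - rloss X β ρ lam c wst) := by rw [hwst]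
    _ ≤ (β * ρ * α / (4 * D ^ 2)) * (lam * D ^ 2 * ‖v‖ ^ 2) := hRHS
    _ = β * ρ * (lam * (α * ‖v‖ ^ 2 / 4)) := heq
    _ ≤ (1 - β) * (lam * gibbsVar X w (fun x => ⟪v, x⟫_ℝ))
        + β * ρ * (lam * gibbsVar X (ρ • w) (fun x => ⟪v, x⟫_ℝ)) := hstep
    _ = ⟪gradient (rloss X β ρ lam c) w, v⟫_ℝ := hLHS.symm

end
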